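/- Let Ω ∈ ℝ^{ℓ×n} have unit first m columns (‖Ωe_j‖ = 1 for j ≤ m). For j ∈ {1,…,m}, define Ψ_j = diag(I_{j−1}, Ω_{j:n}) ∈ ℝ^{(ℓ+j−1)×n} and the modified reflectors H(u_j, Ω, j) = P(u_j, Ψ_j) for vectors u_j whose first j−1 entries vanish. Set β_j = 2/‖Ωu_j‖² and define T_j recursively by T₁ = [β₁], T_{j+1} = [[T_j, −β_j T_j (ΩU_j)ᵀ Ωu_{j+1}],[0, β_j]]. Then for all 1 ≤ j ≤ m, H(u₁,Ω,1)⋯H(u_j,Ω,j) = I − U_j T_j ut((ΩU_j)ᵀΩ), where ut denotes the upper-triangular part (here of a j×n matrix, zeroing entries (i,k) with k < i). -/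

import Mathlib

open Matrix

/-- Euclidean norm of a finitely supported real vector. -/
noncomputable def eucNorm {k : Type*} [Fintype k] (v : k → ℝ) : ℝ := Real.sqrt (v ⬝ᵥ v)

/-- The matrix `U_j = [u₁ | ⋯ | u_j]` whose columns are the (first `j`) Householder
vectors. -/
def Umat {n : ℕ} (u : ℕ → Fin n → ℝ) (j : ℕ) : Matrix (Fin n) (Fin j) ℝ :=
  Matrix.of fun i a => u a i

/-- `[0_{ℓ×j} Ω_{j+1:n}]`: the matrix `Ω` with its first `j` columns zeroed out. -/
def maskMat {l n : ℕ} (Ω : Matrix (Fin l) (Fin n) ℝ) (j : ℕ) : Matrix (Fin l) (Fin n) ℝ :=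
  Matrix.of fun r c => if (c : ℕ) < j then 0 else Ω r c

/-- Upper-triangular part of a rectangular matrix: entries `(i,k)` with `k < i`
are zeroed out. -/
def utR {j n : ℕ} (A : Matrix (Fin j) (Fin n) ℝ) : Matrix (Fin j) (Fin n) ℝ :=
  Matrix.of fun i k => if (k : ℕ) < (i : ℕ) then 0 else A i k

/-- The modified randomized Householder reflector
`H(u_j, Ω, j) = P(u_j, Ψ_j) = I - (2/‖Ωu_j‖²) u_j (Ωu_j)ᵀ [0_{ℓ×(j-1)} Ω_{j:n}]`
(zero-based index `j`), valid when the first `j` coordinates of `u_j` vanish. -/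
noncomputable def Hrefl {l n : ℕ} (Ω : Matrix (Fin l) (Fin n) ℝ) (u : ℕ → Fin n → ℝ)
    (j : ℕ) : Matrix (Fin n) (Fin n) ℝ :=
  1 - (2 / ((Ω.mulVec (u j)) ⬝ᵥ (Ω.mulVec (u j)))) •
    (Matrix.vecMulVec (u j) (Ω.mulVec (u j)) * maskMat Ω j)

/-- The upper-triangular compact-form factor `T_j` for the modified reflectors,
defined by the recursion `T₁ = [β₁]`,
`T_{j+1} = [[T_j, -β T_j (ΩU_j)ᵀ Ωu_{j+1}], [0, β]]` with `β = 2/‖Ωu_{j+1}‖²`. -/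
noncomputable def Tmat {l n : ℕ} (Ω : Matrix (Fin l) (Fin n) ℝ) (u : ℕ → Fin n → ℝ) :
    (j : ℕ) → Matrix (Fin j) (Fin j) ℝ
  | 0 => 0
  | j + 1 =>
    Matrix.reindex finSumFinEquiv finSumFinEquiv
      (Matrix.fromBlocks (Tmat Ω u j)
        (Matrix.of fun i (_ : Fin 1) =>
          ((-(2 / ((Ω.mulVec (u j)) ⬝ᵥ (Ω.mulVec (u j))))) •
              ((Tmat Ω u j).mulVec fun a : Fin j =>
                (Ω.mulVec (u a)) ⬝ᵥ (Ω.mulVec (u j)))) i)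
        0
        (Matrix.of fun _ _ => 2 / ((Ω.mulVec (u j)) ⬝ᵥ (Ω.mulVec (u j)))))

theorem flatMap_single {α β : Type*} (l : List α) (g : α → β) :
    l.flatMap (fun a => [g a]) = l.map g := by
  induction l with
  | nil => rfl
  | cons a t ih => simp [List.flatMap_cons, ih]

section Aux

variable {l n : ℕ}

lemma aux_mask (Ω : Matrix (Fin l) (Fin n) ℝ) (v : Fin n → ℝ) (w : Fin l → ℝ) (j : ℕ) :
    vecMulVec v w * maskMat Ω j =
      vecMulVec v (fun c : Fin n => if (c : ℕ) < j then 0 else w ⬝ᵥ fun x => Ω x c) := by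
  ext i c
  simp only [mul_apply, vecMulVec_apply, maskMat, of_apply, dotProduct]
  by_cases h : (c : ℕ) < j
  · simp [h]
  · simp only [h, if_false, Finset.mul_sum]
    exact Finset.sum_congr rfl fun x _ => by ring

lemma aux_mul_vecMulVec (A : Matrix (Fin n) (Fin n) ℝ) (x r : Fin n → ℝ) :
    A * vecMulVec x r = vecMulVec (A *ᵥ x) r := by
  ext i c
  simp only [mul_apply, vecMulVec_apply, mulVec, dotProduct, Finset.sum_mul]
  exact Finset.sum_congr rfl fun _ _ => by ring

lemma aux_vecMulVec_add (x y r : Fin n → ℝ) :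
    vecMulVec (x + y) r = vecMulVec x r + vecMulVec y r := by
  ext i c; simp [vecMulVec_apply, add_mul]

lemma aux_vecMulVec_smul (c : ℝ) (x r : Fin n → ℝ) :
    vecMulVec (c • x) r = c • vecMulVec x r := by
  ext i k; simp [vecMulVec_apply, mul_assoc]

lemma utR_mulVec {j : ℕ} (M : Matrix (Fin j) (Fin n) ℝ) (v : Fin n → ℝ)
    (hv : ∀ c : Fin n, (c : ℕ) < j → v c = 0) : utR M *ᵥ v = M *ᵥ v := by
  funext a
  simp only [mulVec, dotProduct, utR, of_apply]
  refine Finset.sum_congr rfl fun c _ => ?_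
  by_cases h : (c : ℕ) < (a : ℕ)
  · rw [hv c (h.trans a.isLt), mul_zero, mul_zero]
  · rw [if_neg h]

lemma tripleVec (Ω : Matrix (Fin l) (Fin n) ℝ) (u : ℕ → Fin n → ℝ) (j : ℕ) :
    ((Ω * Umat u j)ᵀ * Ω) *ᵥ u j = fun a : Fin j => (Ω *ᵥ u a) ⬝ᵥ (Ω *ᵥ u j) := by
  funext a
  rw [← mulVec_mulVec]
  simp only [mulVec, dotProduct, transpose_apply, mul_apply, Umat, of_apply]

lemma Umat_succ (u : ℕ → Fin n → ℝ) (j : ℕ) :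
    Umat u (j + 1) =
      (fromCols (Umat u j) (replicateCol (Fin 1) (u j))).submatrix id finSumFinEquiv.symm := by
  ext i a
  refine Fin.lastCases ?_ (fun a => ?_) a
  · simp [Umat, fromCols, finSumFinEquiv_symm_last, replicateCol]
  · have h : finSumFinEquiv.symm (Fin.castSucc a) = Sum.inl a :=
      finSumFinEquiv_symm_apply_castAdd a
    simp [Umat, fromCols, h]

lemma utR_succ (Ω : Matrix (Fin l) (Fin n) ℝ) (u : ℕ → Fin n → ℝ) (j : ℕ) :
    utR ((Ω * Umat u (j + 1))ᵀ * Ω) =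
      (fromRows (utR ((Ω * Umat u j)ᵀ * Ω))
        (replicateRow (Fin 1) (fun c : Fin n =>
          if (c : ℕ) < j then 0 else (Ω *ᵥ u j) ⬝ᵥ fun x => Ω x c))).submatrix
        finSumFinEquiv.symm id := by
  ext i c
  refine Fin.lastCases ?_ (fun a => ?_) i
  · simp only [utR, of_apply, submatrix_apply, finSumFinEquiv_symm_last, fromRows_apply_inr,
      Sum.elim_inr, replicateRow_apply, Fin.val_last, id_eq]
    by_cases h : (c : ℕ) < j
    · simp [h]
    · simp only [h, if_false]
      simp only [mul_apply, mulVec, dotProduct, Umat, transpose_apply, of_apply,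
        Fin.val_last]
  · have h : finSumFinEquiv.symm (Fin.castSucc a) = Sum.inl a :=
      finSumFinEquiv_symm_apply_castAdd a
    simp only [utR, of_apply, submatrix_apply, h, fromRows_apply_inl, Sum.elim_inl, id_eq,
      Fin.coe_castSucc]
    by_cases hc : (c : ℕ) < (a : ℕ)
    · simp [hc]
    · simp only [hc, if_false]
      simp [mul_apply, Umat, Fin.coe_castSucc]

lemma col_mul_const (v : Fin n → ℝ) (β : ℝ) :
    replicateCol (Fin 1) v * Matrix.of (fun _ _ : Fin 1 => β) = replicateCol (Fin 1) (β • v) := by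
  ext i x
  simp [mul_apply, replicateCol, mul_comm]

end Aux

/-- compact form of the composition of modified randomized Householder
reflectors: for all `1 ≤ j ≤ m`,
`H(u₁,Ω,1)⋯H(u_j,Ω,j) = I - U_j T_j ut((ΩU_j)ᵀΩ)`. -/
theorem trim_rhqr_compact {l n : ℕ} (m : ℕ) (Ω : Matrix (Fin l) (Fin n) ℝ)
    (hunit : ∀ c : Fin n, (c : ℕ) < m → eucNorm (Ω.mulVec (Pi.single c 1)) = 1)
    (u : ℕ → Fin n → ℝ)
    (hu0 : ∀ j, ∀ i : Fin n, (i : ℕ) < j → u j i = 0)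
    (huΩ : ∀ j < m, Ω.mulVec (u j) ≠ 0) :
    ∀ j ≤ m,
      ((List.finRange j).map fun a => Hrefl Ω u a).prod =
        1 - Umat u j * Tmat Ω u j * utR ((Ω * Umat u j)ᵀ * Ω) := by
  intro j hj
  induction j with
  | zero =>
    have hz : Umat u 0 * Tmat Ω u 0 * utR ((Ω * Umat u 0)ᵀ * Ω) = 0 := by
      ext x y
      simp [mul_apply]
    simp [hz]
  | succ j ih =>
    have IH := ih (Nat.le_of_succ_le hj)
    have hcoe : ∀ k : ℕ, ((do let a ← List.finRange k; pure ((a : ℕ))) : List ℕ) =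
        (List.finRange k).map Fin.val := fun k => flatMap_single _ _
    rw [hcoe, List.map_map] at IH ⊢
    -- split off the last factor
    rw [List.finRange_succ_last, List.map_append, List.map_map, List.prod_append]
    have hcomp : (((fun a : ℕ => Hrefl Ω u a) ∘ Fin.val) ∘ Fin.castSucc) =
        ((fun a : ℕ => Hrefl Ω u a) ∘ (Fin.val : Fin j → ℕ)) := by
      funext a; simp
    rw [hcomp, IH]
    simp only [List.map_cons, List.map_nil, List.prod_cons, List.prod_nil, mul_one,
      Function.comp_apply, Fin.val_last]
    -- notation
    set w : Fin l → ℝ := Ω *ᵥ u j with hw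
    set β : ℝ := 2 / (w ⬝ᵥ w) with hβ
    set U := Umat u j with hU
    set T := Tmat Ω u j with hT
    set M := utR ((Ω * U)ᵀ * Ω) with hM
    set r : Fin n → ℝ := fun c : Fin n => if (c : ℕ) < j then 0 else w ⬝ᵥ fun x => Ω x c with hr
    set s : Fin j → ℝ := fun a => (Ω *ᵥ u ↑a) ⬝ᵥ w with hs
    -- RHS decomposition
    have hTsucc : Tmat Ω u (j + 1) =
        (fromBlocks T (replicateCol (Fin 1) ((-β) • (T *ᵥ s))) 0
          (Matrix.of fun _ _ : Fin 1 => β)).submatrix finSumFinEquiv.symm finSumFinEquiv.symm := by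
      rw [show Tmat Ω u (j + 1) = Matrix.reindex finSumFinEquiv finSumFinEquiv
        (Matrix.fromBlocks (Tmat Ω u j)
          (Matrix.of fun i (_ : Fin 1) =>
            ((-(2 / ((Ω.mulVec (u j)) ⬝ᵥ (Ω.mulVec (u j))))) •
                ((Tmat Ω u j).mulVec fun a : Fin j =>
                  (Ω.mulVec (u a)) ⬝ᵥ (Ω.mulVec (u j)))) i)
          0
          (Matrix.of fun _ _ => 2 / ((Ω.mulVec (u j)) ⬝ᵥ (Ω.mulVec (u j))))) from rfl,
        reindex_apply]
      rfl
    rw [utR_succ Ω u j, Umat_succ u j, hTsucc, ← hU, ← hM, ← hw, ← hr,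
      submatrix_mul_equiv, submatrix_mul_equiv, submatrix_id_id,
      fromCols_mul_fromBlocks, fromCols_mul_fromRows]
    -- compute the blocks
    rw [Matrix.mul_zero, add_zero, ← replicateCol_mulVec, col_mul_const, ← replicateCol_add,
]
    erw [← vecMulVec_eq (ι := Fin 1)]
    -- LHS computation
    have hH : Hrefl Ω u j = 1 - β • vecMulVec (u j) r := by
      rw [Hrefl, aux_mask]
    rw [hH]
    have hAv : (U * T * M) * vecMulVec (u j) r = vecMulVec (U *ᵥ (T *ᵥ s)) r := by
      rw [aux_mul_vecMulVec]
      congr 1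
      rw [← mulVec_mulVec, ← mulVec_mulVec, hM, utR_mulVec _ _ (hu0 j), tripleVec]
    rw [mul_sub, mul_one, sub_mul, one_mul, Matrix.mul_smul, hAv]
    rw [mulVec_smul, aux_vecMulVec_add, aux_vecMulVec_smul, aux_vecMulVec_smul,
      neg_smul]
    abel
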